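/- Let α be a set of reals > 1. If a ∈ P(α) and m is a positive rational, then a·m ∈ P(α). -/

import Mathlib

noncomputable section

/-- The homothetic copy of a plane figure `S` under `x ↦ r • x + v`. -/
def homothety (r : ℝ) (v : ℝ × ℝ) (S : Set (ℝ × ℝ)) : Set (ℝ × ℝ) :=
  (fun x : ℝ × ℝ => (r * x.1 + v.1, r * x.2 + v.2)) '' S

/-- `S` is tiled by homothetic copies of figures from the family `F`:
`S` is a union of finitely many homothetic copies of members of `F`
whose interiors are pairwise disjoint. -/
def IsTiling (S : Set (ℝ × ℝ)) (F : Set (Set (ℝ × ℝ))) : Prop :=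
  ∃ (n : ℕ) (r : Fin n → ℝ) (v : Fin n → ℝ × ℝ) (t : Fin n → Set (ℝ × ℝ)),
    (∀ i, t i ∈ F) ∧ (∀ i, 0 < r i) ∧
    S = ⋃ i, homothety (r i) (v i) (t i) ∧
    ∀ i j, i ≠ j →
      interior (homothety (r i) (v i) (t i)) ∩ interior (homothety (r j) (v j) (t j)) = ∅
/-- The standard trapezoid `t(a)`: unit height, horizontal bases `a+1` and `a-1`,
base angles `45°`, midline `a`. -/
def stdTrap (a : ℝ) : Set (ℝ × ℝ) :=
  convexHull ℝ ({(0, 0), (a + 1, 0), (a, 1), (1, 1)} : Set (ℝ × ℝ))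

/-- The standard parallelogram `p(a)`: unit height, horizontal bases of length `a`. -/
def stdPar (a : ℝ) : Set (ℝ × ℝ) :=
  convexHull ℝ ({(0, 0), (a, 0), (a + 1, 1), (1, 1)} : Set (ℝ × ℝ))
/-- `T(α)`: the set of `b > 1` such that `t(b)` is tiled by homothetic copies of the
trapezoids `t(a)`, `a ∈ α`. -/
def Tset (α : Set ℝ) : Set ℝ :=
  {b | 1 < b ∧ IsTiling (stdTrap b) (stdTrap '' α)}

/-- `P(α)`: the set of `b > 0` such that `p(b)` is tiled by homothetic copies of the
trapezoids `t(a)`, `a ∈ α`. -/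
def Pset (α : Set ℝ) : Set ℝ :=
  {b | 0 < b ∧ IsTiling (stdPar b) (stdTrap '' α)}

open Set

/-! ### Auxiliary lemmas on homotheties -/

lemma homothety_comp (r s : ℝ) (v w : ℝ × ℝ) (S : Set (ℝ × ℝ)) :
    homothety r v (homothety s w S) =
      homothety (r * s) (r * w.1 + v.1, r * w.2 + v.2) S := by
  unfold homothety
  rw [← Set.image_comp]
  have hf : ((fun x : ℝ × ℝ => (r * x.1 + v.1, r * x.2 + v.2)) ∘
      (fun x : ℝ × ℝ => (s * x.1 + w.1, s * x.2 + w.2))) =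
      (fun x : ℝ × ℝ => (r * s * x.1 + (r * w.1 + v.1, r * w.2 + v.2).1,
        r * s * x.2 + (r * w.1 + v.1, r * w.2 + v.2).2)) := by
    funext x
    simp only [Function.comp, Prod.mk.injEq]
    constructor <;> ring
  rw [hf]

lemma homothety_eq_homeo (r : ℝ) (hr : r ≠ 0) (v : ℝ × ℝ) (S : Set (ℝ × ℝ)) :
    homothety r v S =
      ((Homeomorph.smulOfNeZero r hr).trans (Homeomorph.addRight v)) '' S := by
  unfold homothety
  have hf : (fun x : ℝ × ℝ => (r * x.1 + v.1, r * x.2 + v.2)) =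
      ⇑((Homeomorph.smulOfNeZero r hr).trans (Homeomorph.addRight v)) := by
    funext x
    show _ = r • x + v
    rw [Prod.ext_iff]
    constructor <;> simp [Prod.smul_def]
  rw [hf]

lemma mem_homothety {r : ℝ} (hr : 0 < r) (v : ℝ × ℝ) (S : Set (ℝ × ℝ)) (p : ℝ × ℝ) :
    p ∈ homothety r v S ↔ ((p.1 - v.1) / r, (p.2 - v.2) / r) ∈ S := by
  constructor
  · rintro ⟨q, hq, rfl⟩
    simpa [mul_comm, mul_div_assoc, hr.ne'] using hq
  · intro h
    refine ⟨_, h, ?_⟩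
    rw [Prod.ext_iff]
    constructor <;> (field_simp) <;> ring

lemma interior_homothety {r : ℝ} (hr : 0 < r) (v : ℝ × ℝ) (S : Set (ℝ × ℝ)) :
    interior (homothety r v S) = homothety r v (interior S) := by
  rw [homothety_eq_homeo r hr.ne' v, homothety_eq_homeo r hr.ne' v,
    ← Homeomorph.image_interior]

lemma homothety_inj (r : ℝ) (hr : r ≠ 0) (v : ℝ × ℝ) :
    Function.Injective (fun x : ℝ × ℝ => (r * x.1 + v.1, r * x.2 + v.2)) := by
  intro x y hxy
  simp only [Prod.mk.injEq] at hxy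
  exact Prod.ext (by have := hxy.1; field_simp at this; exact mul_left_cancel₀ hr (by linarith))
    (by have := hxy.2; field_simp at this; exact mul_left_cancel₀ hr (by linarith))

lemma homothety_inter_empty {r : ℝ} (hr : r ≠ 0) (v : ℝ × ℝ) {A B : Set (ℝ × ℝ)}
    (h : A ∩ B = ∅) : homothety r v A ∩ homothety r v B = ∅ := by
  unfold homothety
  rw [← Set.image_inter (homothety_inj r hr v), h, Set.image_empty]

/-! ### Interior separation lemmas -/

lemma interior_perturb {S : Set (ℝ × ℝ)} {x : ℝ × ℝ} (hx : x ∈ interior S)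
    (d : ℝ × ℝ) (hd1 : |d.1| ≤ 1) (hd2 : |d.2| ≤ 1) :
    ∃ t > 0, (x.1 + t * d.1, x.2 + t * d.2) ∈ S := by
  obtain ⟨ε, hε, hball⟩ := Metric.mem_nhds_iff.mp (mem_interior_iff_mem_nhds.mp hx)
  refine ⟨ε / 2, by linarith, ?_⟩
  apply hball
  rw [Metric.mem_ball, Prod.dist_eq]
  simp only [Real.dist_eq]
  have h1 : |x.1 + ε / 2 * d.1 - x.1| ≤ ε / 2 := by
    rw [show x.1 + ε / 2 * d.1 - x.1 = ε / 2 * d.1 by ring, abs_mul,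
      abs_of_pos (by linarith : (0:ℝ) < ε / 2)]
    nlinarith
  have h2 : |x.2 + ε / 2 * d.2 - x.2| ≤ ε / 2 := by
    rw [show x.2 + ε / 2 * d.2 - x.2 = ε / 2 * d.2 by ring, abs_mul,
      abs_of_pos (by linarith : (0:ℝ) < ε / 2)]
    nlinarith
  calc max _ _ ≤ ε / 2 := max_le h1 h2
    _ < ε := by linarith

lemma interior_y_lt {S : Set (ℝ × ℝ)} {c : ℝ} (h : S ⊆ {p | p.2 ≤ c}) :
    interior S ⊆ {p | p.2 < c} := by
  intro x hx
  obtain ⟨t, ht, hm⟩ := interior_perturb hx (0, 1) (by norm_num) (by norm_num)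
  have := h hm
  simp only [mem_setOf_eq] at this ⊢
  linarith

lemma interior_lt_y {S : Set (ℝ × ℝ)} {c : ℝ} (h : S ⊆ {p | c ≤ p.2}) :
    interior S ⊆ {p | c < p.2} := by
  intro x hx
  obtain ⟨t, ht, hm⟩ := interior_perturb hx (0, -1) (by norm_num) (by norm_num)
  have := h hm
  simp only [mem_setOf_eq] at this ⊢
  linarith

lemma interior_diag_lt {S : Set (ℝ × ℝ)} {c : ℝ} (h : S ⊆ {p | p.1 - p.2 ≤ c}) :
    interior S ⊆ {p | p.1 - p.2 < c} := by
  intro x hx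
  obtain ⟨t, ht, hm⟩ := interior_perturb hx (1, 0) (by norm_num) (by norm_num)
  have := h hm
  simp only [mem_setOf_eq] at this ⊢
  linarith

lemma interior_lt_diag {S : Set (ℝ × ℝ)} {c : ℝ} (h : S ⊆ {p | c ≤ p.1 - p.2}) :
    interior S ⊆ {p | c < p.1 - p.2} := by
  intro x hx
  obtain ⟨t, ht, hm⟩ := interior_perturb hx (-1, 0) (by norm_num) (by norm_num)
  have := h hm
  simp only [mem_setOf_eq] at this ⊢
  linarith

/-! ### The standard parallelogram as an intersection of half-planes -/

lemma stdPar_eq {c : ℝ} (hc : 0 < c) :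
    stdPar c = {p : ℝ × ℝ | 0 ≤ p.2 ∧ p.2 ≤ 1 ∧ p.2 ≤ p.1 ∧ p.1 ≤ p.2 + c} := by
  apply Subset.antisymm
  · apply convexHull_min
    · rintro p (rfl | rfl | rfl | rfl) <;>
        exact ⟨by norm_num, by norm_num, by norm_num <;> linarith, by norm_num <;> linarith⟩
    · rintro p hp q hq s t hs ht hst
      simp only [mem_setOf_eq, Prod.fst_add, Prod.snd_add, Prod.smul_fst, Prod.smul_snd,
        smul_eq_mul] at hp hq ⊢
      obtain ⟨p1, p2, p3, p4⟩ := hp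
      obtain ⟨q1, q2, q3, q4⟩ := hq
      refine ⟨by nlinarith, by nlinarith, by nlinarith, by nlinarith⟩
  · rintro ⟨X, Y⟩ ⟨h0, h1, h2, h3⟩
    simp only [mem_setOf_eq] at h0 h1 h2 h3
    set u : ℝ := X - Y with hu
    have hu0 : 0 ≤ u := by simp [hu]; linarith
    have huc : u ≤ c := by simp [hu]; linarith
    have hA : ((u, 0) : ℝ × ℝ) ∈ segment ℝ ((0:ℝ), (0:ℝ)) ((c, 0) : ℝ × ℝ) := by
      refine ⟨1 - u / c, u / c, by rw [sub_nonneg, div_le_one hc]; exact huc,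
        by positivity, by ring, ?_⟩
      rw [Prod.ext_iff]
      constructor <;> simp <;> field_simp
    have hB : ((u + 1, 1) : ℝ × ℝ) ∈ segment ℝ ((1:ℝ), (1:ℝ)) ((c + 1, 1) : ℝ × ℝ) := by
      refine ⟨1 - u / c, u / c, by rw [sub_nonneg, div_le_one hc]; exact huc,
        by positivity, by ring, ?_⟩
      rw [Prod.ext_iff]
      constructor <;> simp <;> field_simp <;> ring
    have hAh : ((u, 0) : ℝ × ℝ) ∈ stdPar c := by
      apply (convex_convexHull ℝ _).segment_subset
        (subset_convexHull ℝ _ (by norm_num))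
        (subset_convexHull ℝ _ (by norm_num)) hA
    have hBh : ((u + 1, 1) : ℝ × ℝ) ∈ stdPar c := by
      apply (convex_convexHull ℝ _).segment_subset
        (subset_convexHull ℝ _ (by norm_num))
        (subset_convexHull ℝ _ (by norm_num)) hB
    have : ((X, Y) : ℝ × ℝ) ∈ segment ℝ ((u, 0) : ℝ × ℝ) ((u + 1, 1) : ℝ × ℝ) := by
      refine ⟨1 - Y, Y, by linarith, h0, by ring, ?_⟩
      rw [Prod.ext_iff]
      constructor
      · show (1 - Y) * u + Y * (u + 1) = X
        rw [hu]; ring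
      · show (1 - Y) * 0 + Y * 1 = Y
        ring
    exact (convex_convexHull ℝ _).segment_subset hAh hBh this

/-! ### Combining tilings of homothetic copies -/

lemma IsTiling.iUnion_homothety {S : Set (ℝ × ℝ)} {F : Set (Set (ℝ × ℝ))}
    (hS : IsTiling S F) (k : ℕ) (R : Fin k → ℝ) (V : Fin k → ℝ × ℝ)
    (hR : ∀ j, 0 < R j)
    (hdisj : ∀ j j', j ≠ j' →
      interior (homothety (R j) (V j) S) ∩ interior (homothety (R j') (V j') S) = ∅) :
    IsTiling (⋃ j, homothety (R j) (V j) S) F := by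
  obtain ⟨n, r, v, t, htF, hrpos, hSeq, hint⟩ := hS
  set e : Fin (k * n) ≃ Fin k × Fin n := finProdFinEquiv.symm with he
  refine ⟨k * n,
    fun i => R (e i).1 * r (e i).2,
    fun i => (R (e i).1 * (v (e i).2).1 + (V (e i).1).1,
              R (e i).1 * (v (e i).2).2 + (V (e i).1).2),
    fun i => t (e i).2,
    fun i => htF _, fun i => mul_pos (hR _) (hrpos _), ?_, ?_⟩
  · have key : ∀ i : Fin (k * n),
        homothety (R (e i).1 * r (e i).2)
          (R (e i).1 * (v (e i).2).1 + (V (e i).1).1,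
           R (e i).1 * (v (e i).2).2 + (V (e i).1).2) (t (e i).2) =
        homothety (R (e i).1) (V (e i).1)
          (homothety (r (e i).2) (v (e i).2) (t (e i).2)) := fun i =>
      (homothety_comp _ _ _ _ _).symm
    calc (⋃ j, homothety (R j) (V j) S)
        = ⋃ j, ⋃ i2, homothety (R j) (V j) (homothety (r i2) (v i2) (t i2)) := by
          refine iUnion_congr fun j => ?_
          rw [hSeq, homothety]
          rw [Set.image_iUnion]
          rfl
      _ = ⋃ p : Fin k × Fin n,
            homothety (R p.1) (V p.1) (homothety (r p.2) (v p.2) (t p.2)) := by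
          rw [iUnion_prod']
      _ = ⋃ i : Fin (k * n), homothety (R (e i).1) (V (e i).1)
            (homothety (r (e i).2) (v (e i).2) (t (e i).2)) := by
          exact (e.surjective.iUnion_comp fun p =>
            homothety (R p.1) (V p.1) (homothety (r p.2) (v p.2) (t p.2))).symm
      _ = _ := iUnion_congr fun i => (key i).symm
  · intro i j hij
    simp only
    rw [← homothety_comp, ← homothety_comp]
    by_cases hjj : (e i).1 = (e j).1
    · have hii : (e i).2 ≠ (e j).2 := by
        intro h2
        exact hij (e.injective (Prod.ext hjj h2))
      rw [hjj, interior_homothety (hR _), interior_homothety (hR _)]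
      exact homothety_inter_empty (hR _).ne' _ (hint _ _ hii)
    · have h1 : interior (homothety (R (e i).1) (V (e i).1)
          (homothety (r (e i).2) (v (e i).2) (t (e i).2))) ⊆
          interior (homothety (R (e i).1) (V (e i).1) S) := by
        apply interior_mono
        apply Set.image_mono
        rw [hSeq]
        exact Set.subset_iUnion (fun i2 => homothety (r i2) (v i2) (t i2)) _
      have h2 : interior (homothety (R (e j).1) (V (e j).1)
          (homothety (r (e j).2) (v (e j).2) (t (e j).2))) ⊆
          interior (homothety (R (e j).1) (V (e j).1) S) := by
        apply interior_mono
        apply Set.image_mono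
        rw [hSeq]
        exact Set.subset_iUnion (fun i2 => homothety (r i2) (v i2) (t i2)) _
      have := hdisj _ _ hjj
      rw [Set.eq_empty_iff_forall_notMem] at this ⊢
      exact fun x hx => this x ⟨h1 hx.1, h2 hx.2⟩

/-! ### Membership in small copies of the parallelogram -/

lemma copy_mem {a : ℝ} (ha : 0 < a) {q : ℕ} (hq : 0 < q) (l j : ℝ) (p : ℝ × ℝ) :
    p ∈ homothety (1 / (q : ℝ)) ((j * a + l) / q, l / q) (stdPar a) ↔
      (l ≤ q * p.2 ∧ q * p.2 ≤ l + 1 ∧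
        q * p.2 ≤ q * p.1 - j * a ∧ q * p.1 - j * a ≤ q * p.2 + a) := by
  have hq0 : (0:ℝ) < (q : ℝ) := by exact_mod_cast hq
  rw [mem_homothety (by positivity), stdPar_eq ha]
  simp only [mem_setOf_eq]
  have e1 : (p.2 - l / q) / (1 / (q:ℝ)) = q * p.2 - l := by field_simp
  have e2 : (p.1 - (j * a + l) / q) / (1 / (q:ℝ)) = q * p.1 - j * a - l := by
    field_simp; ring
  rw [e1, e2]
  constructor
  · rintro ⟨h1, h2, h3, h4⟩
    exact ⟨by linarith, by linarith, by linarith, by linarith⟩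
  · rintro ⟨h1, h2, h3, h4⟩
    exact ⟨by linarith, by linarith, by linarith, by linarith⟩

lemma floor_clamp {x : ℝ} {n : ℕ} (hn : 0 < n) (h0 : 0 ≤ x) (h1 : x ≤ n) :
    ∃ k : ℕ, k < n ∧ (k : ℝ) ≤ x ∧ x ≤ k + 1 := by
  by_cases hc : ⌊x⌋₊ ≤ n - 1
  · exact ⟨⌊x⌋₊, by omega, Nat.floor_le h0, (Nat.lt_floor_add_one x).le⟩
  · refine ⟨n - 1, by omega, ?_, ?_⟩
    · have hnf : n ≤ ⌊x⌋₊ := by omega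
      have : (n : ℝ) ≤ x := le_trans (by exact_mod_cast hnf) (Nat.floor_le h0)
      have hcast : ((n - 1 : ℕ) : ℝ) = (n : ℝ) - 1 := by
        rw [Nat.cast_sub hn]; norm_num
      rw [hcast]; linarith
    · have hcast : ((n - 1 : ℕ) : ℝ) = (n : ℝ) - 1 := by
        rw [Nat.cast_sub hn]; norm_num
      rw [hcast]; linarith

lemma union_eq {a : ℝ} (ha : 0 < a) {q P : ℕ} (hq : 0 < q) (hP : 0 < P) :
    (⋃ i : Fin (q * P),
      homothety (1 / (q : ℝ))
        ((((finProdFinEquiv.symm i : Fin q × Fin P).2 : ℝ) * a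
            + ((finProdFinEquiv.symm i : Fin q × Fin P).1 : ℝ)) / q,
         ((finProdFinEquiv.symm i : Fin q × Fin P).1 : ℝ) / q) (stdPar a))
    = stdPar (a * P / q) := by
  have hq0 : (0:ℝ) < (q:ℝ) := by exact_mod_cast hq
  have hP0 : (0:ℝ) < (P:ℝ) := by exact_mod_cast hP
  have hc : 0 < a * P / q := by positivity
  rw [stdPar_eq hc]
  ext p
  simp only [mem_iUnion, mem_setOf_eq]
  constructor
  · rintro ⟨i, hi⟩
    rw [copy_mem ha hq] at hi
    obtain ⟨h1, h2, h3, h4⟩ := hi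
    set l : ℝ := ((finProdFinEquiv.symm i : Fin q × Fin P).1 : ℝ) with hl
    set j : ℝ := ((finProdFinEquiv.symm i : Fin q × Fin P).2 : ℝ) with hj
    have hl0 : 0 ≤ l := by positivity
    have hj0 : 0 ≤ j := by positivity
    have hlq : l + 1 ≤ q := by
      have := (finProdFinEquiv.symm i : Fin q × Fin P).1.isLt
      have h' : ((finProdFinEquiv.symm i : Fin q × Fin P).1 : ℕ) + 1 ≤ q := this
      rw [hl]; exact_mod_cast h'
    have hjP : j + 1 ≤ P := by
      have := (finProdFinEquiv.symm i : Fin q × Fin P).2.isLt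
      have h' : ((finProdFinEquiv.symm i : Fin q × Fin P).2 : ℕ) + 1 ≤ P := this
      rw [hj]; exact_mod_cast h'
    refine ⟨by nlinarith, by nlinarith, by nlinarith, ?_⟩
    have key : p.1 - p.2 ≤ a * P / q := by
      rw [le_div_iff₀ hq0]
      nlinarith [mul_le_mul_of_nonneg_right hjP ha.le]
    linarith
  · rintro ⟨h0, h1, h2, h3⟩
    obtain ⟨l, hl, hl1, hl2⟩ := floor_clamp hq (x := (q:ℝ) * p.2) (by positivity)
      (by nlinarith)
    have hx2 : (q:ℝ) * (p.1 - p.2) / a ≤ P := by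
      rw [div_le_iff₀ ha]
      have hd : p.1 - p.2 ≤ a * P / q := by linarith
      have hd2 : (p.1 - p.2) * q ≤ a * P := (le_div_iff₀ hq0).mp hd
      nlinarith [hd2]
    obtain ⟨j, hj, hj1, hj2⟩ := floor_clamp hP (x := (q:ℝ) * (p.1 - p.2) / a)
      (div_nonneg (by nlinarith) ha.le) hx2
    refine ⟨finProdFinEquiv (⟨l, hl⟩, ⟨j, hj⟩), ?_⟩
    rw [copy_mem ha hq]
    rw [Equiv.symm_apply_apply]
    have hja : (j:ℝ) * a ≤ q * (p.1 - p.2) := by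
      rw [div_le_iff₀ ha] at hj2
      rw [le_div_iff₀ ha] at hj1
      linarith [hj1]
    have hja2 : (q:ℝ) * (p.1 - p.2) ≤ (j + 1) * a := by
      rw [div_le_iff₀ ha] at hj2
      linarith
    exact ⟨by exact_mod_cast hl1, by exact_mod_cast hl2, by push_cast; nlinarith,
      by push_cast; nlinarith⟩

lemma copy_subset {a : ℝ} (ha : 0 < a) {q : ℕ} (hq : 0 < q) (l j : ℝ) :
    homothety (1 / (q : ℝ)) ((j * a + l) / q, l / q) (stdPar a) ⊆
      {p : ℝ × ℝ | l / q ≤ p.2 ∧ p.2 ≤ (l + 1) / q ∧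
        j * a / q ≤ p.1 - p.2 ∧ p.1 - p.2 ≤ (j * a + a) / q} := by
  have hq0 : (0:ℝ) < (q:ℝ) := by exact_mod_cast hq
  intro p hp
  rw [copy_mem ha hq] at hp
  obtain ⟨h1, h2, h3, h4⟩ := hp
  refine ⟨?_, ?_, ?_, ?_⟩
  · rw [div_le_iff₀ hq0]; linarith
  · rw [le_div_iff₀ hq0]; linarith
  · rw [div_le_iff₀ hq0]; linarith
  · rw [le_div_iff₀ hq0]; linarith

lemma copies_disjoint {a : ℝ} (ha : 0 < a) {q : ℕ} (hq : 0 < q) (l j l' j' : ℕ)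
    (hne : l ≠ l' ∨ j ≠ j') :
    interior (homothety (1 / (q:ℝ)) (((j:ℝ) * a + l) / q, (l:ℝ) / q) (stdPar a)) ∩
      interior (homothety (1 / (q:ℝ)) (((j':ℝ) * a + l') / q, (l':ℝ) / q) (stdPar a)) = ∅ := by
  have hq0 : (0:ℝ) < (q:ℝ) := by exact_mod_cast hq
  have hsub := copy_subset ha hq (l : ℝ) (j : ℝ)
  have hsub' := copy_subset ha hq (l' : ℝ) (j' : ℝ)
  rw [Set.eq_empty_iff_forall_notMem]
  rintro x ⟨hx, hx'⟩
  have b1 := interior_lt_y (fun p hp => (hsub hp).1) hx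
  have b2 := interior_y_lt (fun p hp => (hsub hp).2.1) hx
  have b3 := interior_lt_diag (fun p hp => (hsub hp).2.2.1) hx
  have b4 := interior_diag_lt (fun p hp => (hsub hp).2.2.2) hx
  have c1 := interior_lt_y (fun p hp => (hsub' hp).1) hx'
  have c2 := interior_y_lt (fun p hp => (hsub' hp).2.1) hx'
  have c3 := interior_lt_diag (fun p hp => (hsub' hp).2.2.1) hx'
  have c4 := interior_diag_lt (fun p hp => (hsub' hp).2.2.2) hx'
  simp only [mem_setOf_eq] at b1 b2 b3 b4 c1 c2 c3 c4
  rcases lt_trichotomy l l' with h | h | h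
  · have hcast : ((l:ℝ) + 1) ≤ (l':ℝ) := by exact_mod_cast h
    have hlt : ((l':ℝ)) / q < ((l:ℝ) + 1) / q := lt_trans c1 b2
    rw [div_lt_div_iff₀ hq0 hq0] at hlt
    nlinarith
  · rcases hne with h' | h'
    · exact h' h
    rcases lt_trichotomy j j' with hj | hj | hj
    · have hcast : ((j:ℝ) + 1) ≤ (j':ℝ) := by exact_mod_cast hj
      have hlt : ((j':ℝ)) * a / q < ((j:ℝ) * a + a) / q := lt_trans c3 b4
      rw [div_lt_div_iff₀ hq0 hq0] at hlt
      have hh : ((j:ℝ) + 1) * a * (q:ℝ) ≤ (j':ℝ) * a * (q:ℝ) :=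
        mul_le_mul_of_nonneg_right (mul_le_mul_of_nonneg_right hcast ha.le) hq0.le
      nlinarith [hh]
    · exact h' hj
    · have hcast : ((j':ℝ) + 1) ≤ (j:ℝ) := by exact_mod_cast hj
      have hlt : ((j:ℝ)) * a / q < ((j':ℝ) * a + a) / q := lt_trans b3 c4
      rw [div_lt_div_iff₀ hq0 hq0] at hlt
      have hh : ((j':ℝ) + 1) * a * (q:ℝ) ≤ (j:ℝ) * a * (q:ℝ) :=
        mul_le_mul_of_nonneg_right (mul_le_mul_of_nonneg_right hcast ha.le) hq0.le
      nlinarith [hh]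
  · have hcast : ((l':ℝ) + 1) ≤ (l:ℝ) := by exact_mod_cast h
    have hlt : ((l:ℝ)) / q < ((l':ℝ) + 1) / q := lt_trans b1 c2
    rw [div_lt_div_iff₀ hq0 hq0] at hlt
    nlinarith

/-- **Property 6).** `P(α)` is closed under multiplication by positive rationals. -/
theorem statement10 (α : Set ℝ) (hα : ∀ x ∈ α, 1 < x)
    (a : ℝ) (ha : a ∈ Pset α) (m : ℚ) (hm : 0 < m) :
    a * m ∈ Pset α := by
  obtain ⟨ha0, htile⟩ := ha
  set q : ℕ := m.den with hqdef
  set P : ℕ := m.num.toNat with hPdef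
  have hq : 0 < q := m.pos
  have hnum : (0:ℤ) < m.num := Rat.num_pos.mpr hm
  have hP : 0 < P := by rw [hPdef]; omega
  have hq0 : (0:ℝ) < (q:ℝ) := by exact_mod_cast hq
  have hmcast : (m : ℝ) = (P : ℝ) / (q : ℝ) := by
    rw [Rat.cast_def]
    congr 1
    rw [hPdef]
    rw [show ((m.num.toNat : ℕ) : ℝ) = ((m.num.toNat : ℤ) : ℝ) by push_cast; ring,
      Int.toNat_of_nonneg hnum.le]
  have hm0 : (0:ℝ) < (m:ℝ) := by exact_mod_cast hm
  refine ⟨mul_pos ha0 hm0, ?_⟩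
  have key := htile.iUnion_homothety (q * P)
    (fun _ => 1 / (q:ℝ))
    (fun i => ((((finProdFinEquiv.symm i : Fin q × Fin P).2 : ℝ) * a
        + ((finProdFinEquiv.symm i : Fin q × Fin P).1 : ℝ)) / q,
      ((finProdFinEquiv.symm i : Fin q × Fin P).1 : ℝ) / q))
    (fun _ => by positivity)
    (fun i i' hii => by
      apply copies_disjoint ha0 hq
      by_contra hcon
      push_neg at hcon
      apply hii
      apply finProdFinEquiv.symm.injective
      exact Prod.ext (Fin.ext hcon.1) (Fin.ext hcon.2))
  rw [union_eq ha0 hq hP] at key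
  have harm : a * (m:ℝ) = a * P / q := by rw [hmcast]; ring
  rw [harm]
  exact key
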